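/- Let n = q_1 q_2 ⋯ q_a be a product of a primes (not necessarily distinct). The Z_n-sequence (1, q_1, q_1 q_2, ..., q_1 ⋯ q_{a−1}) of length a is not a Z_n^*-weighted Davenport Z-sequence: there is no choice of coefficients a_i ∈ Z_n^* ∪ {0}, not all zero, with ∑_i a_i x_i = 0 in Z_n. -/

import Mathlib

theorem prime_products_not_unit_weighted_davenport (a : ℕ) (q : ℕ → ℕ)
    (hq : ∀ i < a, (q i).Prime) (n : ℕ) (hn : n = ∏ i ∈ Finset.range a, q i) :
    ¬ ∃ c : Fin a → ZMod n,
        (∀ i, c i = 0 ∨ IsUnit (c i)) ∧ (∃ i, c i ≠ 0) ∧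
        ∑ i : Fin a, c i * ((∏ j ∈ Finset.range (i : ℕ), q j : ℕ) : ZMod n) = 0 := by
  rintro ⟨c, hunit, ⟨i₁, hi₁⟩, hsum⟩
  have hn0 : n ≠ 0 := by
    rw [hn]
    exact Finset.prod_ne_zero_iff.2 fun i hi => (hq i (Finset.mem_range.1 hi)).ne_zero
  haveI : NeZero n := ⟨hn0⟩
  set P : ℕ → ℕ := fun k => ∏ j ∈ Finset.range k, q j with hP
  set C : ℕ → ℕ := fun k => if h : k < a then (c ⟨k, h⟩).val else 0 with hC
  have hex : ∃ k, ∃ h : k < a, c ⟨k, h⟩ ≠ 0 := ⟨i₁, i₁.2, by simpa using hi₁⟩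
  set i0 := Nat.find hex with hi0def
  obtain ⟨hi0a, hi0ne⟩ := Nat.find_spec hex
  have hmin : ∀ k < i0, C k = 0 := by
    intro k hk
    by_cases h : k < a
    · have h2 := Nat.find_min hex hk
      push_neg at h2
      simp [hC, h, ZMod.val_eq_zero, h2 h]
    · simp [hC, h]
  -- divisibility of the total sum
  have hdvd : n ∣ ∑ k ∈ Finset.range a, C k * P k := by
    rw [← ZMod.natCast_eq_zero_iff]
    push_cast
    rw [← Fin.sum_univ_eq_sum_range (fun k => (C k : ZMod n) * (P k : ZMod n)) a]
    rw [← hsum]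
    apply Finset.sum_congr rfl
    intro i _
    simp [hC, hP, i.2, ZMod.natCast_val, ZMod.cast_id]
  have hsplit : ∑ k ∈ Finset.range a, C k * P k
      = C i0 * P i0 + ∑ k ∈ Finset.Ico (i0 + 1) a, C k * P k := by
    rw [Finset.range_eq_Ico, ← Finset.sum_Ico_consecutive _ (Nat.zero_le i0) (le_of_lt hi0a)]
    rw [Finset.sum_eq_sum_Ico_succ_bot hi0a]
    rw [Finset.sum_eq_zero (fun k hk => by
      rw [hmin k (Finset.mem_Ico.1 hk).2, zero_mul]), zero_add]
  have hPn : P (i0 + 1) ∣ n := by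
    rw [hn]
    exact Finset.prod_dvd_prod_of_subset _ _ _ (Finset.range_subset_range.2 hi0a)
  have hT : P (i0 + 1) ∣ ∑ k ∈ Finset.Ico (i0 + 1) a, C k * P k := by
    apply Finset.dvd_sum
    intro k hk
    exact Dvd.dvd.mul_left
      (Finset.prod_dvd_prod_of_subset _ _ _ (Finset.range_subset_range.2 (Finset.mem_Ico.1 hk).1)) _
  have hhead : P (i0 + 1) ∣ C i0 * P i0 := by
    have htot : P (i0 + 1) ∣ C i0 * P i0 + ∑ k ∈ Finset.Ico (i0 + 1) a, C k * P k := by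
      rw [← hsplit]
      exact dvd_trans hPn hdvd
    simpa using Nat.dvd_sub htot hT
  have hP0 : 0 < P i0 := by
    apply Nat.pos_of_ne_zero
    apply Finset.prod_ne_zero_iff.2
    intro i hi
    exact (hq i (lt_trans (Finset.mem_range.1 hi) hi0a)).ne_zero
  have hqC : q i0 ∣ C i0 := by
    have : P i0 * q i0 ∣ P i0 * C i0 := by
      rw [mul_comm (C i0) (P i0)] at hhead
      simpa [hP, Finset.prod_range_succ] using hhead
    exact (mul_dvd_mul_iff_left hP0.ne').mp this
  have hqn : q i0 ∣ n := dvd_trans (by simp [hP, Finset.prod_range_succ]) hPn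
  have hcop : Nat.Coprime (C i0) n := by
    have hu : IsUnit (c ⟨i0, hi0a⟩) := (hunit ⟨i0, hi0a⟩).resolve_left hi0ne
    have : C i0 = (c ⟨i0, hi0a⟩).val := by simp only [hC]; exact dif_pos hi0a
    rw [this]
    rw [← ZMod.isUnit_iff_coprime]
    simpa [ZMod.natCast_val, ZMod.cast_id] using hu
  have h1 : q i0 ∣ 1 := hcop ▸ Nat.dvd_gcd hqC hqn
  exact (hq i0 hi0a).ne_one (Nat.dvd_one.mp h1)
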